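/- Let f, g be admissible circle densities with cumulative distribution functions F, G and define I(α) = ∫₀¹ (F⁻¹(t) − G⁻¹(t − α))² dt. Then I is twice differentiable at every α ∈ ℝ and I″(α) = 2 ∫₀¹ dt / f(F⁻¹(G(t) + α)) = 2 ∫₀¹ dt / g(G⁻¹(F(t) − α)); in particular I″(α) > 0. -/

import Mathlib

open MeasureTheory Set Function

section helpers

variable {f F Finv : ℝ → ℝ} {η : ℝ}

lemma cdf_hasDerivAt (hfc : Continuous f)
    (hF : ∀ t, F t = ∫ τ in (0:ℝ)..t, f τ) (t : ℝ) : HasDerivAt F (f t) t := by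
  have h := intervalIntegral.integral_hasDerivAt_right
    (hfc.intervalIntegrable 0 t) (hfc.stronglyMeasurableAtFilter _ _)
    hfc.continuousAt
  have hFe : F = fun u => ∫ τ in (0:ℝ)..u, f τ := funext hF
  rw [hFe]; exact h

lemma cdf_continuous (hfc : Continuous f)
    (hF : ∀ t, F t = ∫ τ in (0:ℝ)..t, f τ) : Continuous F :=
  continuous_iff_continuousAt.2 fun t => (cdf_hasDerivAt hfc hF t).continuousAt

lemma cdf_gap (hfc : Continuous f) (hfl : ∀ t, η ≤ f t)
    (hF : ∀ t, F t = ∫ τ in (0:ℝ)..t, f τ) {a b : ℝ} (hab : a ≤ b) :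
    η * (b - a) ≤ F b - F a := by
  have h1 : F b - F a = ∫ τ in a..b, f τ := by
    rw [hF, hF, intervalIntegral.integral_interval_sub_left
      (hfc.intervalIntegrable 0 b) (hfc.intervalIntegrable 0 a)]
  have h2 : (∫ _ in a..b, η) ≤ ∫ τ in a..b, f τ :=
    intervalIntegral.integral_mono_on hab intervalIntegrable_const
      (hfc.intervalIntegrable a b) (fun x _ => hfl x)
  rw [intervalIntegral.integral_const, smul_eq_mul] at h2
  linarith [h2, h1 ▸ h2]

lemma cdf_strictMono (hη : 0 < η) (hfc : Continuous f) (hfl : ∀ t, η ≤ f t)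
    (hF : ∀ t, F t = ∫ τ in (0:ℝ)..t, f τ) : StrictMono F := fun a b h => by
  have := cdf_gap hfc hfl hF h.le
  nlinarith

lemma cdf_add_one (hfc : Continuous f) (hfp : Function.Periodic f 1)
    (hfm : (∫ t in (0:ℝ)..1, f t) = 1)
    (hF : ∀ t, F t = ∫ τ in (0:ℝ)..t, f τ) (t : ℝ) : F (t + 1) = F t + 1 := by
  have h1 : F (t+1) - F t = ∫ τ in t..t+1, f τ := by
    rw [hF, hF, intervalIntegral.integral_interval_sub_left
      (hfc.intervalIntegrable 0 (t+1)) (hfc.intervalIntegrable 0 t)]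
  have h2 : (∫ τ in t..t+1, f τ) = ∫ τ in (0:ℝ)..(0+1:ℝ), f τ := hfp.intervalIntegral_add_eq t 0
  rw [zero_add, hfm] at h2
  linarith [h1, h2]

lemma inv_strictMono (hη : 0 < η) (hfc : Continuous f) (hfl : ∀ t, η ≤ f t)
    (hF : ∀ t, F t = ∫ τ in (0:ℝ)..t, f τ)
    (hF₂ : Function.RightInverse Finv F) : StrictMono Finv := fun x y h => by
  have hm := cdf_strictMono hη hfc hfl hF
  have : F (Finv x) < F (Finv y) := by rw [hF₂, hF₂]; exact h
  exact hm.lt_iff_lt.mp this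

lemma inv_continuous (hη : 0 < η) (hfc : Continuous f) (hfl : ∀ t, η ≤ f t)
    (hF : ∀ t, F t = ∫ τ in (0:ℝ)..t, f τ)
    (hF₁ : Function.LeftInverse Finv F) (hF₂ : Function.RightInverse Finv F) :
    Continuous Finv := by
  have hm := inv_strictMono hη hfc hfl hF hF₂
  have hs : Function.Surjective Finv := hF₁.surjective
  have h := (StrictMono.orderIsoOfSurjective Finv hm hs).toHomeomorph.continuous
  have he : ⇑(StrictMono.orderIsoOfSurjective Finv hm hs).toHomeomorph = Finv := rfl
  rwa [he] at h

lemma inv_hasDerivAt (hη : 0 < η) (hfc : Continuous f) (hfl : ∀ t, η ≤ f t)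
    (hF : ∀ t, F t = ∫ τ in (0:ℝ)..t, f τ)
    (hF₁ : Function.LeftInverse Finv F) (hF₂ : Function.RightInverse Finv F) (x : ℝ) :
    HasDerivAt Finv (1 / f (Finv x)) x := by
  have h := HasDerivAt.of_local_left_inverse
    ((inv_continuous hη hfc hfl hF hF₁ hF₂).continuousAt)
    (cdf_hasDerivAt hfc hF (Finv x))
    (ne_of_gt (hη.trans_le (hfl _)))
    (Filter.Eventually.of_forall hF₂)
  simpa [one_div] using h

lemma inv_add_one (hfc : Continuous f) (hfp : Function.Periodic f 1)
    (hfm : (∫ t in (0:ℝ)..1, f t) = 1)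
    (hF : ∀ t, F t = ∫ τ in (0:ℝ)..t, f τ)
    (hF₁ : Function.LeftInverse Finv F) (hF₂ : Function.RightInverse Finv F) (x : ℝ) :
    Finv (x + 1) = Finv x + 1 := by
  have h : F (Finv x + 1) = x + 1 := by
    rw [cdf_add_one hfc hfp hfm hF, hF₂]
  calc Finv (x+1) = Finv (F (Finv x + 1)) := by rw [h]
  _ = Finv x + 1 := hF₁ _

end helpers

/-- I is twice differentiable with
I″(α) = 2 ∫₀¹ dt / f(F⁻¹(G(t) + α)) = 2 ∫₀¹ dt / g(G⁻¹(F(t) − α)) > 0. -/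
theorem I_second_derivative
    (f g F G Finv Ginv : ℝ → ℝ) (η : ℝ) (hη : 0 < η)
    (hfc : Continuous f) (hgc : Continuous g)
    (hfp : Function.Periodic f 1) (hgp : Function.Periodic g 1)
    (hfl : ∀ t, η ≤ f t) (hgl : ∀ t, η ≤ g t)
    (hfm : (∫ t in (0:ℝ)..1, f t) = 1) (hgm : (∫ t in (0:ℝ)..1, g t) = 1)
    (hF : ∀ t, F t = ∫ τ in (0:ℝ)..t, f τ) (hG : ∀ t, G t = ∫ τ in (0:ℝ)..t, g τ)
    (hF₁ : Function.LeftInverse Finv F) (hF₂ : Function.RightInverse Finv F)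
    (hG₁ : Function.LeftInverse Ginv G) (hG₂ : Function.RightInverse Ginv G)
    (I : ℝ → ℝ) (hI : ∀ α, I α = ∫ t in (0:ℝ)..1, (Finv t - Ginv (t - α)) ^ 2) :
    (∀ α : ℝ, DifferentiableAt ℝ I α) ∧
      ∀ α : ℝ,
        HasDerivAt (deriv I) (2 * ∫ t in (0:ℝ)..1, 1 / f (Finv (G t + α))) α ∧
        (2 * ∫ t in (0:ℝ)..1, 1 / f (Finv (G t + α)))
          = (2 * ∫ t in (0:ℝ)..1, 1 / g (Ginv (F t - α))) ∧
        (0 < 2 * ∫ t in (0:ℝ)..1, 1 / f (Finv (G t + α))) := by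
  -- nonvanishing
  have hfne : ∀ s, f s ≠ 0 := fun s => (hη.trans_le (hfl s)).ne'
  have hgne : ∀ s, g s ≠ 0 := fun s => (hη.trans_le (hgl s)).ne'
  -- derivatives of CDFs
  have dF : ∀ t, HasDerivAt F (f t) t := cdf_hasDerivAt hfc hF
  have dG : ∀ t, HasDerivAt G (g t) t := cdf_hasDerivAt hgc hG
  have cF : Continuous F := cdf_continuous hfc hF
  have cG : Continuous G := cdf_continuous hgc hG
  -- inverses
  have cFinv : Continuous Finv := inv_continuous hη hfc hfl hF hF₁ hF₂
  have cGinv : Continuous Ginv := inv_continuous hη hgc hgl hG hG₁ hG₂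
  have dFinv : ∀ x, HasDerivAt Finv (1 / f (Finv x)) x := inv_hasDerivAt hη hfc hfl hF hF₁ hF₂
  have dGinv : ∀ x, HasDerivAt Ginv (1 / g (Ginv x)) x := inv_hasDerivAt hη hgc hgl hG hG₁ hG₂
  have GaddOne : ∀ t, G (t + 1) = G t + 1 := cdf_add_one hgc hgp hgm hG
  have FinvAdd : ∀ x, Finv (x + 1) = Finv x + 1 := inv_add_one hfc hfp hfm hF hF₁ hF₂
  have GinvAdd : ∀ x, Ginv (x + 1) = Ginv x + 1 := inv_add_one hgc hgp hgm hG hG₁ hG₂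
  have F0 : F 0 = 0 := by rw [hF]; simp
  have F1 : F 1 = 1 := by rw [hF]; exact hfm
  have Finv0 : Finv 0 = 0 := by have h := hF₁ 0; rwa [F0] at h
  have Finv1 : Finv 1 = 1 := by have h := hF₁ 1; rwa [F1] at h
  -- continuity of various integrands
  have c1 : ∀ α : ℝ, Continuous fun t => 2 * (Finv t - Ginv (t - α)) * (1 / g (Ginv (t - α))) := by
    intro α
    have c0 : Continuous fun t : ℝ => Ginv (t - α) := cGinv.comp (continuous_id.sub continuous_const)
    exact (continuous_const.mul (cFinv.sub c0)).mul
      (continuous_const.div (hgc.comp c0) (fun t => hgne _))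
  have c2 : ∀ α : ℝ, Continuous fun s => Finv (G s + α) - s :=
    fun α => (cFinv.comp ((cG.add continuous_const))).sub continuous_id
  have c3 : ∀ α : ℝ, Continuous fun s => 1 / f (Finv (G s + α)) :=
    fun α => continuous_const.div (hfc.comp (cFinv.comp (cG.add continuous_const))) (fun s => hfne _)
  -- Step A: first derivative of I
  have stepA : ∀ α₀ : ℝ, HasDerivAt I
      (∫ t in (0:ℝ)..1, 2 * (Finv t - Ginv (t - α₀)) * (1 / g (Ginv (t - α₀)))) α₀ := by
    intro α₀
    have contP : Continuous fun p : ℝ × ℝ =>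
        2 * (Finv p.2 - Ginv (p.2 - p.1)) * (1 / g (Ginv (p.2 - p.1))) := by
      have c0 : Continuous fun p : ℝ × ℝ => Ginv (p.2 - p.1) :=
        cGinv.comp (continuous_snd.sub continuous_fst)
      exact (continuous_const.mul ((cFinv.comp continuous_snd).sub c0)).mul
        (continuous_const.div (hgc.comp c0) (fun p => hgne _))
    obtain ⟨C, hC⟩ := ((isCompact_Icc (a := α₀ - 1) (b := α₀ + 1)).prod
      (isCompact_Icc (a := (0:ℝ)) (b := 1))).exists_bound_of_continuousOn contP.continuousOn
    have key := intervalIntegral.hasDerivAt_integral_of_dominated_loc_of_deriv_le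
      (F := fun x t => (Finv t - Ginv (t - x)) ^ 2)
      (F' := fun x t => 2 * (Finv t - Ginv (t - x)) * (1 / g (Ginv (t - x))))
      (x₀ := α₀) (a := 0) (b := 1) (μ := volume) (bound := fun _ => C) (s := Metric.ball α₀ 1) (Metric.ball_mem_nhds α₀ one_pos)
      (Filter.Eventually.of_forall fun x => by
        have c0 : Continuous fun t : ℝ => Ginv (t - x) :=
          cGinv.comp (continuous_id.sub continuous_const)
        exact ((cFinv.sub c0).pow 2).aestronglyMeasurable)
      (by
        have c0 : Continuous fun t : ℝ => Ginv (t - α₀) :=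
          cGinv.comp (continuous_id.sub continuous_const)
        exact ((cFinv.sub c0).pow 2).intervalIntegrable 0 1)
      ((c1 α₀).aestronglyMeasurable)
      (Filter.Eventually.of_forall fun t ht x hx => by
        have hx' : x ∈ Icc (α₀ - 1) (α₀ + 1) := by
          rw [Metric.mem_ball, Real.dist_eq] at hx
          constructor <;> [linarith [abs_lt.mp hx |>.1]; linarith [abs_lt.mp hx |>.2]]
        have ht' : t ∈ Icc (0:ℝ) 1 := by
          rw [Set.uIoc_of_le (by norm_num : (0:ℝ) ≤ 1)] at ht
          exact ⟨ht.1.le, ht.2⟩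
        exact hC (x, t) ⟨hx', ht'⟩)
      (intervalIntegrable_const)
      (Filter.Eventually.of_forall fun t ht x hx => by
        have h1 : HasDerivAt (fun x : ℝ => t - x) (-1) x := by
          simpa using (hasDerivAt_id x).const_sub t
        have h2 := (dGinv (t - x)).comp x h1
        have h3 := h2.const_sub (Finv t)
        have h4 := h3.pow 2
        refine h4.congr_deriv ?_
        simp only [Function.comp_apply]
        push_cast
        ring)
    have hIfun : I = fun x => ∫ t in (0:ℝ)..1, (Finv t - Ginv (t - x)) ^ 2 := funext hI
    rw [hIfun]
    exact key.2
  -- Step B: change of variables in the first derivative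
  have stepB : ∀ α : ℝ,
      (∫ t in (0:ℝ)..1, 2 * (Finv t - Ginv (t - α)) * (1 / g (Ginv (t - α))))
        = 2 * ∫ s in (0:ℝ)..1, (Finv (G s + α) - s) := by
    intro α
    set a := Ginv (-α) with ha
    have hφ : ∀ s ∈ uIcc a (a + 1), HasDerivAt (fun s => G s + α) (g s) s :=
      fun s _ => (dG s).add_const α
    have h := intervalIntegral.integral_comp_smul_deriv hφ hgc.continuousOn (c1 α)
    have ha0 : G a + α = 0 := by rw [hG₂]; ring
    have ha1 : G (a + 1) + α = 1 := by rw [GaddOne, hG₂]; ring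
    rw [ha0, ha1] at h
    have hL : ∀ s, g s • ((fun t => 2 * (Finv t - Ginv (t - α)) * (1 / g (Ginv (t - α)))) ∘
        (fun s => G s + α)) s = 2 * (Finv (G s + α) - s) := by
      intro s
      have h1 : G s + α - α = G s := by ring
      simp only [comp, smul_eq_mul, h1]
      rw [hG₁ s]
      field_simp [hgne s]
    rw [intervalIntegral.integral_congr (fun s _ => hL s)] at h
    have hper : Function.Periodic (fun s => 2 * (Finv (G s + α) - s)) 1 := by
      intro s
      simp only
      rw [GaddOne, show G s + 1 + α = (G s + α) + 1 by ring, FinvAdd]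
      ring
    have hps := hper.intervalIntegral_add_eq a 0
    rw [zero_add] at hps
    rw [← h, hps, intervalIntegral.integral_const_mul]
  -- combine A and B
  have stepAB : ∀ α : ℝ, HasDerivAt I (2 * ∫ s in (0:ℝ)..1, (Finv (G s + α) - s)) α :=
    fun α => (stepB α) ▸ stepA α
  have derivI : deriv I = fun α => 2 * ∫ s in (0:ℝ)..1, (Finv (G s + α) - s) :=
    funext fun α => (stepAB α).deriv
  -- Step C: second derivative
  have stepC : ∀ α₀ : ℝ, HasDerivAt (fun x => 2 * ∫ s in (0:ℝ)..1, (Finv (G s + x) - s))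
      (2 * ∫ t in (0:ℝ)..1, 1 / f (Finv (G t + α₀))) α₀ := by
    intro α₀
    have key := intervalIntegral.hasDerivAt_integral_of_dominated_loc_of_deriv_le
      (F := fun x s => Finv (G s + x) - s)
      (F' := fun x s => 1 / f (Finv (G s + x)))
      (x₀ := α₀) (a := 0) (b := 1) (μ := volume) (bound := fun _ => 1 / η) (s := Metric.ball α₀ 1) (Metric.ball_mem_nhds α₀ one_pos)
      (Filter.Eventually.of_forall fun x => (c2 x).aestronglyMeasurable)
      ((c2 α₀).intervalIntegrable 0 1)
      ((c3 α₀).aestronglyMeasurable)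
      (Filter.Eventually.of_forall fun s _ x _ => by
        have hpos : 0 < f (Finv (G s + x)) := hη.trans_le (hfl _)
        rw [Real.norm_eq_abs, abs_of_pos (by positivity)]
        exact one_div_le_one_div_of_le hη (hfl _))
      (intervalIntegrable_const)
      (Filter.Eventually.of_forall fun s _ x _ => by
        have h1 : HasDerivAt (fun x : ℝ => G s + x) 1 x := (hasDerivAt_id x).const_add (G s)
        have h2 := (dFinv (G s + x)).comp x h1
        simpa using h2.sub_const s)
    exact key.2.const_mul 2
  -- Step D: equality of the two integral representations
  have stepD : ∀ α : ℝ,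
      (∫ t in (0:ℝ)..1, 1 / f (Finv (G t + α))) = ∫ t in (0:ℝ)..1, 1 / g (Ginv (F t - α)) := by
    intro α
    set a := Ginv (-α) with ha
    have hφ : ∀ u ∈ uIcc a (a + 1),
        HasDerivAt (fun u => Finv (G u + α)) (1 / f (Finv (G u + α)) * g u) u := by
      intro u _
      exact (dFinv (G u + α)).comp u ((dG u).add_const α)
    have hφ'c : Continuous fun u => 1 / f (Finv (G u + α)) * g u := (c3 α).mul hgc
    have hhc : Continuous fun t => 1 / g (Ginv (F t - α)) :=
      continuous_const.div (hgc.comp (cGinv.comp (cF.sub continuous_const))) (fun t => hgne _)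
    have h := intervalIntegral.integral_comp_smul_deriv hφ hφ'c.continuousOn hhc
    have ea : Finv (G a + α) = 0 := by
      rw [hG₂, show -α + α = (0:ℝ) by ring, Finv0]
    have eb : Finv (G (a + 1) + α) = 1 := by
      rw [GaddOne, hG₂, show -α + 1 + α = (1:ℝ) by ring, Finv1]
    rw [ea, eb] at h
    have hL : ∀ u, (1 / f (Finv (G u + α)) * g u) •
        ((fun t => 1 / g (Ginv (F t - α))) ∘ (fun u => Finv (G u + α))) u
        = 1 / f (Finv (G u + α)) := by
      intro u
      simp only [comp, smul_eq_mul]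
      rw [hF₂ (G u + α), show G u + α - α = G u by ring, hG₁ u,
        mul_assoc, mul_one_div, div_self (hgne u), mul_one]
    rw [intervalIntegral.integral_congr (fun u _ => hL u)] at h
    have hper : Function.Periodic (fun u => 1 / f (Finv (G u + α))) 1 := by
      intro u
      simp only
      rw [GaddOne, show G u + 1 + α = (G u + α) + 1 by ring, FinvAdd, hfp]
    have hps := hper.intervalIntegral_add_eq a 0
    rw [zero_add] at hps
    rw [← h, hps]
  -- Step E: positivity
  have stepE : ∀ α : ℝ, 0 < ∫ t in (0:ℝ)..1, 1 / f (Finv (G t + α)) := by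
    intro α
    apply intervalIntegral.intervalIntegral_pos_of_pos_on ((c3 α).intervalIntegrable 0 1)
    · intro x _
      have : 0 < f (Finv (G x + α)) := hη.trans_le (hfl _)
      positivity
    · norm_num
  refine ⟨fun α => (stepAB α).differentiableAt, fun α => ⟨?_, ?_, ?_⟩⟩
  · rw [derivI]; exact stepC α
  · rw [stepD]
  · have := stepE α; linarith
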